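/- Let δ, λ, μ, γ, σ_m > 0 and define V(a) = (1 + δ·a)·e^{−λ·a} for a ≥ 0. If either (i) 2δ ≥ λ and μ/γ + σ_m·γ/min(1, λ/δ) ≤ δ·e^{−2 + λ/δ}, or (ii) 2δ < λ and δ + μ/γ < λ, then there exists a* ≥ 0 such that V'(a*) + μ/γ ≤ 0. Moreover, in case (i) one may take a* = 2/λ − 1/δ, for which V'(a*) = −δ·e^{−2 + λ/δ}, and in case (ii) one may take a* = 0, for which V'(0) = δ − λ. -/

import Mathlib

lemma derivV (δ lam : ℝ) (V : ℝ → ℝ)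
    (hV : ∀ a, V a = (1 + δ * a) * Real.exp (-(lam * a))) (a : ℝ) :
    deriv V a = (δ - lam * (1 + δ * a)) * Real.exp (-(lam * a)) := by
  have hfun : V = fun a => (1 + δ * a) * Real.exp (-(lam * a)) := funext hV
  rw [hfun]
  have h1 : HasDerivAt (fun a : ℝ => 1 + δ * a) δ a := by
    simpa using ((hasDerivAt_id a).const_mul δ).const_add 1
  have h2 : HasDerivAt (fun a : ℝ => Real.exp (-(lam * a))) (-lam * Real.exp (-(lam * a))) a := by
    have : HasDerivAt (fun a : ℝ => -(lam * a)) (-lam) a := by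
      simpa using (show HasDerivAt (fun y => -(lam * id y)) _ a from ((hasDerivAt_id a).const_mul lam).neg)
    simpa [mul_comm] using this.exp
  have := (h1.mul h2).deriv
  rw [show deriv (fun a => (1 + δ * a) * Real.exp (-(lam * a))) a = _ from this]; ring

/-- Sufficient criteria for a vulnerable plaque: with `V(a) = (1 + δa)e^{−λa}`, if either
(i) `2δ ≥ λ` and `μ/γ + σ_m γ/min(1, λ/δ) ≤ δ e^{−2 + λ/δ}`, or (ii) `2δ < λ` and
`δ + μ/γ < λ`, then `V'(a*) + μ/γ ≤ 0` for some `a* ≥ 0`; in case (i) one may take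
`a* = 2/λ − 1/δ`, where `V'(a*) = −δ e^{−2 + λ/δ}`, and in case (ii) `a* = 0`, where
`V'(0) = δ − λ`. -/
theorem stmt19 (δ lam μ γ σ : ℝ)
    (hδ : 0 < δ) (hlam : 0 < lam) (hμ : 0 < μ) (hγ : 0 < γ) (hσ : 0 < σ)
    (V : ℝ → ℝ) (hV : ∀ a, V a = (1 + δ * a) * Real.exp (-(lam * a))) :
    (((2 * δ ≥ lam ∧ μ / γ + σ * γ / min 1 (lam / δ) ≤ δ * Real.exp (-2 + lam / δ)) ∨
        (2 * δ < lam ∧ δ + μ / γ < lam)) →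
      ∃ a : ℝ, 0 ≤ a ∧ deriv V a + μ / γ ≤ 0) ∧
    ((2 * δ ≥ lam ∧ μ / γ + σ * γ / min 1 (lam / δ) ≤ δ * Real.exp (-2 + lam / δ)) →
      0 ≤ 2 / lam - 1 / δ ∧
      deriv V (2 / lam - 1 / δ) = -(δ * Real.exp (-2 + lam / δ)) ∧
      deriv V (2 / lam - 1 / δ) + μ / γ ≤ 0) ∧
    ((2 * δ < lam ∧ δ + μ / γ < lam) →
      deriv V 0 = δ - lam ∧ deriv V 0 + μ / γ ≤ 0) := by
  have hD := derivV δ lam V hV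
  have case1 : (2 * δ ≥ lam ∧ μ / γ + σ * γ / min 1 (lam / δ) ≤ δ * Real.exp (-2 + lam / δ)) →
      0 ≤ 2 / lam - 1 / δ ∧
      deriv V (2 / lam - 1 / δ) = -(δ * Real.exp (-2 + lam / δ)) ∧
      deriv V (2 / lam - 1 / δ) + μ / γ ≤ 0 := by
    rintro ⟨h1, h2⟩
    have ha : 0 ≤ 2 / lam - 1 / δ := by
      rw [sub_nonneg, div_le_div_iff₀ hδ hlam]
      linarith
    have harg : -(lam * (2 / lam - 1 / δ)) = -2 + lam / δ := by
      field_simp; ring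
    have hd : deriv V (2 / lam - 1 / δ) = -(δ * Real.exp (-2 + lam / δ)) := by
      rw [hD, harg]
      have : δ - lam * (1 + δ * (2 / lam - 1 / δ)) = -δ := by field_simp; ring
      rw [this]; ring
    refine ⟨ha, hd, ?_⟩
    have hmin : 0 < min 1 (lam / δ) := lt_min one_pos (div_pos hlam hδ)
    have hpos : 0 < σ * γ / min 1 (lam / δ) := div_pos (mul_pos hσ hγ) hmin
    rw [hd]; linarith
  have case2 : (2 * δ < lam ∧ δ + μ / γ < lam) →
      deriv V 0 = δ - lam ∧ deriv V 0 + μ / γ ≤ 0 := by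
    rintro ⟨h1, h2⟩
    have hd : deriv V 0 = δ - lam := by rw [hD]; simp
    exact ⟨hd, by rw [hd]; linarith⟩
  refine ⟨?_, case1, case2⟩
  rintro (h | h)
  · obtain ⟨ha, _, hle⟩ := case1 h
    exact ⟨_, ha, hle⟩
  · obtain ⟨_, hle⟩ := case2 h
    exact ⟨0, le_refl 0, hle⟩
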